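/- Let T be a spanning tree of the telescope graph Tele_n(k_0,...,k_n). Then T is a single-step tree (it contains exactly one of the edges f, g and a path from x to s avoiding c) if and only if T contains exactly one edge from each of the pairs {f,g}, {e_i, ê_i} for i in [1,n], and {h_i^j, ĥ_i^j} for all valid i,j. In particular, the complement E(G) \ T of every single-step tree is again a spanning tree. -/

import Mathlib

open Finset

noncomputable section
open scoped Classical

/-- A finite multigraph without loops: each edge has an unordered pair of
distinct endpoints. -/
structure Multigraph (V E : Type) where
  ends : E → Sym2 V
  loopless : ∀ e, ¬ (ends e).IsDiag

/-- A ribbon structure: for each vertex, a "next edge" map describing the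
cyclic ordering of the edges incident to that vertex. -/
structure RibbonStruct (V E : Type) where
  next : V → E → E

/-- The group of degree-zero divisors on the vertex set `V`. -/
def Div0 (V : Type) [Fintype V] : AddSubgroup (V → ℤ) where
  carrier := {D | ∑ v, D v = 0}
  add_mem' := by
    intro a b ha hb
    simp only [Set.mem_setOf_eq, Pi.add_apply, Finset.sum_add_distrib] at *
    omega
  zero_mem' := by simp
  neg_mem' := by
    intro a ha
    simp only [Set.mem_setOf_eq, Pi.neg_apply, Finset.sum_neg_distrib] at *
    omega

/-- The divisor `c - s`. -/
def chipDiv {V : Type} [DecidableEq V] (c s : V) : V → ℤ :=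
  fun v => (if v = c then 1 else 0) - (if v = s then 1 else 0)

namespace Multigraph

variable {V E : Type} [Fintype V] [Fintype E] [DecidableEq V] [DecidableEq E]

/-- Two vertices are adjacent if they are the two endpoints of some edge. -/
def Adj (G : Multigraph V E) (x y : V) : Prop := ∃ e : E, G.ends e = s(x, y)

/-- A multigraph is connected if any two vertices are joined by a walk. -/
def Connected (G : Multigraph V E) : Prop := ∀ x y : V, Relation.ReflTransGen G.Adj x y

/-- Adjacency using only edges from the set `T`. -/
def AdjOn (G : Multigraph V E) (T : Finset E) (x y : V) : Prop := ∃ e ∈ T, G.ends e = s(x, y)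

/-- Reachability using only edges from the set `T`. -/
def ReachOn (G : Multigraph V E) (T : Finset E) (x y : V) : Prop :=
  Relation.ReflTransGen (G.AdjOn T) x y

/-- A spanning tree: a spanning connected edge set of the correct cardinality. -/
def IsSpanningTree (G : Multigraph V E) (T : Finset E) : Prop :=
  (∀ x y : V, G.ReachOn T x y) ∧ T.card = Fintype.card V - 1

/-- The degree of a vertex: the number of incident edges. -/
def degree (G : Multigraph V E) (v : V) : ℕ := (univ.filter fun e => v ∈ G.ends e).card

/-- The number of edges of `T` incident to `v`. -/
def treeDegree (G : Multigraph V E) (T : Finset E) (v : V) : ℕ :=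
  (T.filter fun e => v ∈ G.ends e).card

/-- A leaf vertex of `T`: incident to exactly one edge of `T`. -/
def IsLeafVertex (G : Multigraph V E) (T : Finset E) (v : V) : Prop := G.treeDegree T v = 1

/-- A leaf edge of `T`: an edge of `T` incident to a leaf vertex. -/
def IsLeafEdge (G : Multigraph V E) (T : Finset E) (e : E) : Prop :=
  e ∈ T ∧ ∃ v, v ∈ G.ends e ∧ G.IsLeafVertex T v

/-- Adjacency within `T` avoiding the vertex `x`. -/
def AdjOnAvoid (G : Multigraph V E) (T : Finset E) (x : V) (a b : V) : Prop :=
  G.AdjOn T a b ∧ a ≠ x ∧ b ≠ x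

/-- "The path in `T` from `a` to `r` passes through `y`": `a` cannot reach `r`
within `T` while avoiding the vertex `y`. -/
def PathThrough (G : Multigraph V E) (T : Finset E) (r a y : V) : Prop :=
  ¬ Relation.ReflTransGen (G.AdjOnAvoid T y) a r

/-- Adjacency in `G` avoiding the vertex `x`. -/
def AdjAvoid (G : Multigraph V E) (x : V) (a b : V) : Prop := G.Adj a b ∧ a ≠ x ∧ b ≠ x

/-- 2-connected: connected and with no cut vertices. -/
def TwoConnected (G : Multigraph V E) : Prop :=
  G.Connected ∧ ∀ x a b : V, a ≠ x → b ≠ x →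
    Relation.ReflTransGen (G.AdjAvoid x) a b

/-- The row of the Laplacian matrix of `G` corresponding to the vertex `v`
(the divisor obtained by "firing" the vertex `v`, negated). -/
def lapRow (G : Multigraph V E) (v : V) : V → ℤ := fun w =>
  if w = v then (G.degree v : ℤ) else -((univ.filter fun e => G.ends e = s(v, w)).card : ℤ)

/-- The subgroup of divisors generated by the rows of the Laplacian, i.e. the
integer image of the Laplacian. -/
def LapSubgroup (G : Multigraph V E) : AddSubgroup (V → ℤ) :=
  AddSubgroup.closure (Set.range G.lapRow)

/-- Two divisors are firing equivalent when their difference lies in the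
integer image of the Laplacian. -/
def FiringEquiv (G : Multigraph V E) (D D' : V → ℤ) : Prop := D - D' ∈ G.LapSubgroup

/-- The sandpile group (Picard group) `Pic⁰(G)`:
degree-zero divisors modulo the image of the Laplacian. -/
def Pic0 (G : Multigraph V E) : Type :=
  Div0 V ⧸ ((G.LapSubgroup).addSubgroupOf (Div0 V))

instance (G : Multigraph V E) : AddCommGroup G.Pic0 :=
  QuotientAddGroup.Quotient.addCommGroup _

/-- The class in `Pic⁰(G)` of a degree-zero divisor. -/
def picClass (G : Multigraph V E) (D : V → ℤ) (hD : D ∈ Div0 V) : G.Pic0 :=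
  QuotientAddGroup.mk ⟨D, hD⟩

/-- `cfg` is the rotor configuration of the tree `T` with sink `s` (each
non-sink vertex carries the first edge of `T` on its path to `s`). -/
def IsRotorCfg (G : Multigraph V E) (s : V) (T : Finset E) (cfg : V → E) : Prop :=
  ∀ v, v ≠ s → cfg v ∈ T ∧ v ∈ G.ends (cfg v) ∧ ¬ G.ReachOn (T.erase (cfg v)) v s

/-- One step along the rotors of `cfg` (with sink `s`):
from `a ≠ s` across the rotor at `a` to its other endpoint `b`. -/
def RotorStep (G : Multigraph V E) (s : V) (cfg : V → E) (a b : V) : Prop :=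
  a ≠ s ∧ G.ends (cfg a) = s(a, b)

/-- A rotor configuration is acyclic: following rotors never returns to a
starting vertex. -/
def RotorAcyclic (G : Multigraph V E) (s : V) (cfg : V → E) : Prop :=
  ∀ a : V, ¬ Relation.TransGen (G.RotorStep s cfg) a a

/-- One step of the single-chip rotor-routing process: the state is a pair
(rotor configuration, chip position); the rotor at the chip's position is
rotated one step in the cyclic order `χ`, and the chip then moves across the
new rotor. -/
def RRStep (G : Multigraph V E) (χ : RibbonStruct V E) (p q : (V → E) × V) : Prop :=
  q.1 = Function.update p.1 p.2 (χ.next p.2 (p.1 p.2)) ∧ G.ends (q.1 p.2) = s(p.2, q.2)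

/-- A run of length `n` of the rotor-routing algorithm with sink `s`. -/
def IsRun (G : Multigraph V E) (χ : RibbonStruct V E) (s : V)
    (σ : ℕ → (V → E) × V) (n : ℕ) : Prop :=
  ∀ i, i < n → (σ i).2 ≠ s ∧ G.RRStep χ (σ i) (σ i.succ)

/-- At step `i` of the run `σ`, the chip crosses the edge `e` from `u` to `w`. -/
def Crosses (G : Multigraph V E) (σ : ℕ → (V → E) × V) (i : ℕ) (e : E) (u w : V) : Prop :=
  (σ i).2 = u ∧ (σ (i + 1)).2 = w ∧ (σ (i + 1)).1 u = e ∧ G.ends e = s(u, w)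

/-- A dart of `G`: an edge together with a chosen head. -/
def Dart (G : Multigraph V E) : Type := {p : E × V // p.2 ∈ G.ends p.1}

/-- The "next dart along a face" relation determined by the ribbon structure. -/
def FaceRel (G : Multigraph V E) (χ : RibbonStruct V E) (a b : G.Dart) : Prop :=
  b.1.1 = χ.next a.1.2 a.1.1 ∧ G.ends b.1.1 = s(a.1.2, b.1.2)

/-- The number of faces of the ribbon graph `(G, χ)`: the number of orbits of
the face map on darts. -/
def numFaces (G : Multigraph V E) (χ : RibbonStruct V E) : ℕ :=
  Nat.card (Quot (G.FaceRel χ))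

end Multigraph

/-- The axioms making `χ` an honest ribbon structure on `G`: at each vertex,
`next` is a bijection preserving the incident edges and acting transitively
(i.e. cyclically) on them. -/
def RibbonStruct.IsRibbon {V E : Type} [Fintype V] [Fintype E]
    (χ : RibbonStruct V E) (G : Multigraph V E) : Prop :=
  (∀ v : V, Function.Bijective (χ.next v)) ∧
  (∀ v e, v ∈ G.ends e → v ∈ G.ends (χ.next v e)) ∧
  (∀ v e f, v ∈ G.ends e → v ∈ G.ends f → ∃ m : ℕ, (χ.next v)^[m] e = f)

/-- A plane graph: a connected ribbon graph of genus 0 (Euler's formula). -/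
def Multigraph.IsPlane {V E : Type} [Fintype V] [Fintype E] [DecidableEq V] [DecidableEq E]
    (G : Multigraph V E) (χ : RibbonStruct V E) : Prop :=
  G.Connected ∧ χ.IsRibbon G ∧
    Fintype.card V + G.numFaces χ = Fintype.card E + 2

/-- An isomorphism of ribbon graphs: a pair of bijections on vertices and
edges preserving incidence and the cyclic orderings. -/
def IsRibbonIso {V E V' E' : Type}
    (G : Multigraph V E) (χ : RibbonStruct V E)
    (G' : Multigraph V' E') (χ' : RibbonStruct V' E')
    (φV : V ≃ V') (φE : E ≃ E') : Prop :=
  (∀ e, G'.ends (φE e) = (G.ends e).map φV) ∧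
  ∀ v e, v ∈ G.ends e → φE (χ.next v e) = χ'.next (φV v) (φE e)


/-- The vertices of the telescope graph: the apex `c`, the spine vertices
`z_0, …, z_n`, and for each `i` the `k i` extra degree-2 vertices `w i j`. -/
abbrev TeleV (n : ℕ) (k : Fin (n + 1) → ℕ) : Type :=
  Unit ⊕ Fin (n + 1) ⊕ (Σ i : Fin (n + 1), Fin (k i))

/-- The edges of the telescope graph: `g` (= `inl false`), `f` (= `inl true`),
the parallel pairs `e_i, ê_i` along the spine, and the pairs `h i j, ĥ i j`
through the degree-2 vertices. -/
abbrev TeleE (n : ℕ) (k : Fin (n + 1) → ℕ) : Type :=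
  Bool ⊕ (Fin n × Bool) ⊕ ((Σ i : Fin (n + 1), Fin (k i)) × Bool)

def teleC {n : ℕ} {k : Fin (n + 1) → ℕ} : TeleV n k := Sum.inl ()
def teleZ {n : ℕ} {k : Fin (n + 1) → ℕ} (i : Fin (n + 1)) : TeleV n k := Sum.inr (Sum.inl i)
def teleW {n : ℕ} {k : Fin (n + 1) → ℕ} (i : Fin (n + 1)) (j : Fin (k i)) : TeleV n k :=
  Sum.inr (Sum.inr ⟨i, j⟩)

def teleG {n : ℕ} {k : Fin (n + 1) → ℕ} : TeleE n k := Sum.inl false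
def teleF {n : ℕ} {k : Fin (n + 1) → ℕ} : TeleE n k := Sum.inl true
def teleEdge {n : ℕ} {k : Fin (n + 1) → ℕ} (i : Fin n) (b : Bool) : TeleE n k :=
  Sum.inr (Sum.inl (i, b))
def teleH {n : ℕ} {k : Fin (n + 1) → ℕ} (i : Fin (n + 1)) (j : Fin (k i)) (b : Bool) :
    TeleE n k := Sum.inr (Sum.inr (⟨i, j⟩, b))

/-- The telescope graph `Tele_n(k_0, …, k_n)`: `g` joins `c` to `z_0`, `f`
joins `c` to `z_n`, a pair of parallel edges joins `z_{i-1}` to `z_i` for each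
`i`, and each `w i j` is joined to both `z_i` and `c`. -/
def teleGraph (n : ℕ) (k : Fin (n + 1) → ℕ) : Multigraph (TeleV n k) (TeleE n k) where
  ends := fun e =>
    match e with
    | Sum.inl b => if b then s(teleC, teleZ (Fin.last n)) else s(teleC, teleZ 0)
    | Sum.inr (Sum.inl (i, _)) => s(teleZ i.castSucc, teleZ i.succ)
    | Sum.inr (Sum.inr (⟨i, j⟩, b)) => if b then s(teleW i j, teleC) else s(teleW i j, teleZ i)
  loopless := by
    rintro (b | ⟨i, b⟩ | ⟨⟨i, j⟩, b⟩) h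
    · cases b <;> simp [teleC, teleZ, Sym2.mk_isDiag_iff] at h
    · simp only [teleZ, Sym2.mk_isDiag_iff, Sum.inr.injEq, Sum.inl.injEq] at h
      exact (Fin.castSucc_lt_succ (i := i)).ne h
    · cases b <;> simp [teleW, teleC, teleZ, Sym2.mk_isDiag_iff] at h

/-- A single-step tree with respect to the distinguished data `(c, x, s, f, g)`:
a spanning tree containing exactly one of `f` and `g` together with a path
from `x` to `s` avoiding `c` (so that `(c-s, ·)` is a single-step pair or
`(s-c, ·)` a reverse single-step pair of the rotor-routing algorithm). -/
def SingleStepTree {V E : Type} [Fintype V] [Fintype E] [DecidableEq V] [DecidableEq E]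
    (G : Multigraph V E) (c x s : V) (f g : E) (T : Finset E) : Prop :=
  Xor' (f ∈ T) (g ∈ T) ∧ Relation.ReflTransGen (G.AdjOnAvoid T c) x s

namespace TeleAux

variable {n : ℕ} {k : Fin (n + 1) → ℕ}

lemma z_ne_c (i : Fin (n + 1)) : (teleZ i : TeleV n k) ≠ teleC := by
  simp [teleC, teleZ]

lemma w_ne_c (i : Fin (n + 1)) (j : Fin (k i)) : (teleW i j : TeleV n k) ≠ teleC := by
  simp [teleC, teleW]

lemma ends_f : (teleGraph n k).ends teleF = s(teleC, teleZ (Fin.last n)) := by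
  simp [teleGraph, teleF]

lemma ends_g : (teleGraph n k).ends teleG = s(teleC, teleZ 0) := by
  simp [teleGraph, teleG]

lemma ends_e (i : Fin n) (b : Bool) :
    (teleGraph n k).ends (teleEdge i b) = s(teleZ i.castSucc, teleZ i.succ) := by
  simp [teleGraph, teleEdge]

lemma ends_h0 (i : Fin (n + 1)) (j : Fin (k i)) :
    (teleGraph n k).ends (teleH i j false) = s(teleW i j, teleZ i) := by
  simp [teleGraph, teleH]

lemma ends_h1 (i : Fin (n + 1)) (j : Fin (k i)) :
    (teleGraph n k).ends (teleH i j true) = s(teleW i j, teleC) := by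
  simp [teleGraph, teleH]

lemma adjOn_symm {V E : Type} [Fintype V] [Fintype E] [DecidableEq V] [DecidableEq E]
    (G : Multigraph V E) (S : Finset E) : Symmetric (G.AdjOn S) := by
  rintro a b ⟨e, he, h⟩
  exact ⟨e, he, by rw [h, Sym2.eq_swap]⟩

lemma reachOn_symm {V E : Type} [Fintype V] [Fintype E] [DecidableEq V] [DecidableEq E]
    (G : Multigraph V E) (S : Finset E) {a b : V} (h : G.ReachOn S a b) : G.ReachOn S b a :=
  by
    induction h with
    | refl => exact Relation.ReflTransGen.refl
    | tail _ hab ih => exact Relation.ReflTransGen.head (adjOn_symm G S hab) ih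

lemma reach_of_avoid {S : Finset (TeleE n k)} {x y : TeleV n k}
    (h : Relation.ReflTransGen ((teleGraph n k).AdjOnAvoid S teleC) x y) :
    (teleGraph n k).ReachOn S x y :=
  by
    induction h with
    | refl => exact Relation.ReflTransGen.refl
    | tail _ hab ih => exact ih.tail hab.1

/-- Path along the spine avoiding `c`, using one edge of each parallel pair. -/
lemma spine_reach (S : Finset (TeleE n k))
    (hS : ∀ i : Fin n, ∃ b, teleEdge i b ∈ S) (i : Fin (n + 1)) :
    Relation.ReflTransGen ((teleGraph n k).AdjOnAvoid S teleC) (teleZ 0) (teleZ i) := by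
  induction i using Fin.induction with
  | zero => exact Relation.ReflTransGen.refl
  | succ i ih =>
      obtain ⟨b, hb⟩ := hS i
      exact ih.tail ⟨⟨teleEdge i b, hb, ends_e i b⟩, z_ne_c _, z_ne_c _⟩

/-- The cut function used to show a `c`-avoiding path from `z_0` to `z_n`
must use an edge of the `i`-th parallel pair. -/
def phi (i : Fin n) : TeleV n k → Bool
  | Sum.inl _ => true
  | Sum.inr (Sum.inl j) => decide (j.val ≤ i.val)
  | Sum.inr (Sum.inr p) => decide (p.1.val ≤ i.val)

lemma e_in_T_of_path (T : Finset (TeleE n k))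
    (hpath : Relation.ReflTransGen ((teleGraph n k).AdjOnAvoid T teleC)
      (teleZ 0) (teleZ (Fin.last n))) (i : Fin n) :
    teleEdge i false ∈ T ∨ teleEdge i true ∈ T := by
  by_contra hcon
  push_neg at hcon
  have inv : ∀ a b : TeleV n k, (teleGraph n k).AdjOnAvoid T teleC a b →
      phi i a = phi i b := by
    rintro a b ⟨⟨e, heT, hends⟩, ha, hb⟩
    rcases e with bb | ⟨i', bb⟩ | ⟨⟨i', j'⟩, bb⟩
    · exfalso
      cases bb <;>
        · simp only [teleGraph] at hends
          simp only [if_true, if_false, Bool.false_eq_true, ite_false, ite_true] at hends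
          rw [Sym2.eq_iff] at hends
          rcases hends with ⟨h1, _⟩ | ⟨h1, _⟩
          · exact ha h1.symm
          · exact hb h1.symm
    · have hne : i' ≠ i := by
        rintro rfl
        cases bb
        · exact hcon.1 heT
        · exact hcon.2 heT
      have hval : i'.val ≠ i.val := fun h => hne (Fin.ext h)
      have hends' : (teleGraph n k).ends (Sum.inr (Sum.inl (i', bb))) =
          s(teleZ i'.castSucc, teleZ i'.succ) := by simp [teleGraph]
      rw [hends'] at hends
      rw [Sym2.eq_iff] at hends
      have hphi : phi i (teleZ i'.castSucc : TeleV n k) = phi i (teleZ i'.succ : TeleV n k) := by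
        simp only [phi, teleZ, Fin.coe_castSucc, Fin.val_succ]
        have : (i'.val ≤ i.val) ↔ (i'.val + 1 ≤ i.val) := by omega
        simp [this]
      rcases hends with ⟨h1, h2⟩ | ⟨h1, h2⟩
      · rw [← h1, ← h2]; exact hphi
      · rw [← h1, ← h2]; exact hphi.symm
    · cases bb
      · have hends' : (teleGraph n k).ends (teleH i' j' false) =
            s(teleW i' j', teleZ i') := ends_h0 i' j'
        rw [show (Sum.inr (Sum.inr (⟨⟨i', j'⟩, false⟩ : (Σ i : Fin (n+1), Fin (k i)) × Bool)) :
            TeleE n k) = teleH i' j' false from rfl, hends'] at hends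
        rw [Sym2.eq_iff] at hends
        have hphi : phi i (teleW i' j' : TeleV n k) = phi i (teleZ i' : TeleV n k) := by
          simp [phi, teleW, teleZ]
        rcases hends with ⟨h1, h2⟩ | ⟨h1, h2⟩
        · rw [← h1, ← h2]; exact hphi
        · rw [← h1, ← h2]; exact hphi.symm
      · exfalso
        have hends' : (teleGraph n k).ends (teleH i' j' true) =
            s(teleW i' j', teleC) := ends_h1 i' j'
        rw [show (Sum.inr (Sum.inr (⟨⟨i', j'⟩, true⟩ : (Σ i : Fin (n+1), Fin (k i)) × Bool)) :
            TeleE n k) = teleH i' j' true from rfl, hends'] at hends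
        rw [Sym2.eq_iff] at hends
        rcases hends with ⟨_, h2⟩ | ⟨_, h2⟩
        · exact hb h2.symm
        · exact ha h2.symm
  have key : ∀ a b : TeleV n k, Relation.ReflTransGen ((teleGraph n k).AdjOnAvoid T teleC) a b →
      phi i a = phi i b := by
    intro a b h
    induction h with
    | refl => rfl
    | tail _ hstep ih => exact ih.trans (inv _ _ hstep)
  have hinv : phi i (teleZ 0 : TeleV n k) = phi i (teleZ (Fin.last n)) := key _ _ hpath
  have h0 : phi i (teleZ 0 : TeleV n k) = true := by
    simp [phi, teleZ]
  have hn : phi i (teleZ (Fin.last n) : TeleV n k) = false := by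
    simp only [phi, teleZ, Fin.val_last, decide_eq_false_iff_not]
    omega
  rw [h0, hn] at hinv
  simp at hinv

/-- Connectivity forces at least one of the two edges at each degree-2 vertex. -/
lemma h_in_T_of_conn (T : Finset (TeleE n k))
    (hconn : ∀ x y : TeleV n k, (teleGraph n k).ReachOn T x y)
    (i : Fin (n + 1)) (j : Fin (k i)) :
    teleH i j false ∈ T ∨ teleH i j true ∈ T := by
  have hr := hconn (teleW i j) teleC
  rcases hr.cases_head with heq | ⟨b, ⟨e, heT, hends⟩, _⟩
  · exact absurd heq (w_ne_c i j)
  · rcases e with bb | ⟨i', bb⟩ | ⟨⟨i', j'⟩, bb⟩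
    · exfalso
      cases bb <;>
        · simp only [teleGraph] at hends
          simp only [if_true, if_false, Bool.false_eq_true, ite_false, ite_true] at hends
          rw [Sym2.eq_iff] at hends
          simp [teleC, teleZ, teleW] at hends
    · exfalso
      have : (teleGraph n k).ends (Sum.inr (Sum.inl (i', bb))) =
          s(teleZ i'.castSucc, teleZ i'.succ) := by simp [teleGraph]
      rw [this, Sym2.eq_iff] at hends
      simp [teleZ, teleW] at hends
    · have hij : i' = i ∧ HEq j' j := by
        cases bb
        · rw [show (Sum.inr (Sum.inr (⟨⟨i', j'⟩, false⟩ :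
              (Σ i : Fin (n+1), Fin (k i)) × Bool)) : TeleE n k) = teleH i' j' false from rfl,
            ends_h0, Sym2.eq_iff] at hends
          rcases hends with ⟨h1, _⟩ | ⟨_, h2⟩
          · simp [teleW] at h1; exact ⟨h1.1, h1.2⟩
          · exfalso; simp [teleW, teleZ] at h2
        · rw [show (Sum.inr (Sum.inr (⟨⟨i', j'⟩, true⟩ :
              (Σ i : Fin (n+1), Fin (k i)) × Bool)) : TeleE n k) = teleH i' j' true from rfl,
            ends_h1, Sym2.eq_iff] at hends
          rcases hends with ⟨h1, _⟩ | ⟨_, h2⟩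
          · simp [teleW] at h1; exact ⟨h1.1, h1.2⟩
          · exfalso; simp [teleW, teleC] at h2
      obtain ⟨rfl, hj⟩ := hij
      have : j' = j := eq_of_heq hj
      subst this
      cases bb
      · exact Or.inl heT
      · exact Or.inr heT

/-- The type indexing the edge pairs `{f,g}`, `{e_i, ê_i}`, `{h i j, ĥ i j}`. -/
abbrev PairIdx (n : ℕ) (k : Fin (n + 1) → ℕ) : Type :=
  Unit ⊕ Fin n ⊕ (Σ i : Fin (n + 1), Fin (k i))

/-- The pair an edge belongs to. -/
def pr : TeleE n k → PairIdx n k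
  | Sum.inl _ => Sum.inl ()
  | Sum.inr (Sum.inl (i, _)) => Sum.inr (Sum.inl i)
  | Sum.inr (Sum.inr (p, _)) => Sum.inr (Sum.inr p)

/-- The two edges of a pair. -/
def ed (q : PairIdx n k) (b : Bool) : TeleE n k :=
  match q with
  | Sum.inl _ => Sum.inl b
  | Sum.inr (Sum.inl i) => Sum.inr (Sum.inl (i, b))
  | Sum.inr (Sum.inr p) => Sum.inr (Sum.inr (p, b))

lemma pr_ed (q : PairIdx n k) (b : Bool) : pr (ed q b) = q := by
  rcases q with _ | i | p <;> rfl

lemma ed_ne (q : PairIdx n k) : (ed q false : TeleE n k) ≠ ed q true := by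
  rcases q with _ | i | p <;> simp [ed]

lemma card_pairIdx : Fintype.card (PairIdx n k) = 1 + n + ∑ i, k i := by
  simp [Fintype.card_sum, Fintype.card_sigma]
  omega

lemma card_V : Fintype.card (TeleV n k) = 2 + n + ∑ i, k i := by
  simp [Fintype.card_sum, Fintype.card_sigma]
  omega

lemma card_E : Fintype.card (TeleE n k) = 2 + 2 * n + 2 * ∑ i, k i := by
  simp [Fintype.card_sum, Fintype.card_sigma, Fintype.card_prod, ← Finset.sum_mul, ← Finset.mul_sum]
  omega

/-- The counting argument: a set of the right cardinality meeting every pair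
meets every pair exactly once. -/
lemma count_xor (T : Finset (TeleE n k)) (hcard : T.card = 1 + n + ∑ i, k i)
    (hfib : ∀ q : PairIdx n k, ed q false ∈ T ∨ ed q true ∈ T) (q : PairIdx n k) :
    Xor' (ed q false ∈ T) (ed q true ∈ T) := by
  classical
  have hsum : ∑ q : PairIdx n k, (T.filter (fun e => pr e = q)).card = T.card :=
    (Finset.card_eq_sum_card_fiberwise (fun e _ => Finset.mem_univ (pr e))).symm
  have hone : ∀ q : PairIdx n k, 1 ≤ (T.filter (fun e => pr e = q)).card := by
    intro q
    rcases hfib q with h | h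
    · exact Finset.card_pos.2 ⟨ed q false, Finset.mem_filter.2 ⟨h, pr_ed q false⟩⟩
    · exact Finset.card_pos.2 ⟨ed q true, Finset.mem_filter.2 ⟨h, pr_ed q true⟩⟩
  have hall : ∀ q : PairIdx n k, (T.filter (fun e => pr e = q)).card = 1 := by
    by_contra hc
    push_neg at hc
    obtain ⟨q0, hq0⟩ := hc
    have hlt : ∑ _q : PairIdx n k, 1 < ∑ q : PairIdx n k, (T.filter (fun e => pr e = q)).card :=
      Finset.sum_lt_sum (fun q _ => hone q)
        ⟨q0, Finset.mem_univ _, by have := hone q0; omega⟩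
    rw [hsum, Finset.sum_const, smul_eq_mul, mul_one, Finset.card_univ] at hlt
    rw [card_pairIdx, hcard] at hlt
    omega
  have hle : ed q false ∈ T → ed q true ∈ T → False := by
    intro hf ht
    have hsub : ({ed q false, ed q true} : Finset (TeleE n k)) ⊆
        T.filter (fun e => pr e = q) := by
      intro e he
      rcases Finset.mem_insert.1 he with rfl | he
      · exact Finset.mem_filter.2 ⟨hf, pr_ed q false⟩
      · rw [Finset.mem_singleton.1 he]
        exact Finset.mem_filter.2 ⟨ht, pr_ed q true⟩
    have h2 : 2 ≤ (T.filter (fun e => pr e = q)).card := by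
      have := Finset.card_le_card hsub
      rwa [Finset.card_pair (ed_ne q)] at this
    rw [hall q] at h2
    omega
  rcases hfib q with h | h
  · exact Or.inl ⟨h, fun ht => hle h ht⟩
  · exact Or.inr ⟨h, fun hf => hle hf h⟩

end TeleAux

/-- a spanning tree of the telescope graph is a single-step tree
iff it contains exactly one edge from each of the pairs `{f, g}`,
`{e_i, ê_i}` and `{h i j, ĥ i j}`; in particular the complement of every
single-step tree is again a spanning tree. -/
theorem telescope_single_step_trees (n : ℕ) (k : Fin (n + 1) → ℕ)
    (T : Finset (TeleE n k)) (hT : (teleGraph n k).IsSpanningTree T) :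
    (SingleStepTree (teleGraph n k) teleC (teleZ 0) (teleZ (Fin.last n)) teleF teleG T ↔
      (Xor' (teleF ∈ T) (teleG ∈ T) ∧
       (∀ i : Fin n, Xor' (teleEdge i false ∈ T) (teleEdge i true ∈ T)) ∧
       (∀ (i : Fin (n + 1)) (j : Fin (k i)),
         Xor' (teleH i j false ∈ T) (teleH i j true ∈ T)))) ∧
    (SingleStepTree (teleGraph n k) teleC (teleZ 0) (teleZ (Fin.last n)) teleF teleG T →
      (teleGraph n k).IsSpanningTree (Finset.univ \ T)) := by
  classical
  obtain ⟨hconn, hcard⟩ := hT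
  have hcardV : Fintype.card (TeleV n k) = 2 + n + ∑ i, k i := TeleAux.card_V
  have hcard' : T.card = 1 + n + ∑ i, k i := by
    rw [hcard, hcardV]
    omega
  have forward : SingleStepTree (teleGraph n k) teleC (teleZ 0) (teleZ (Fin.last n))
      teleF teleG T →
      (Xor' (teleF ∈ T) (teleG ∈ T) ∧
       (∀ i : Fin n, Xor' (teleEdge i false ∈ T) (teleEdge i true ∈ T)) ∧
       (∀ (i : Fin (n + 1)) (j : Fin (k i)),
         Xor' (teleH i j false ∈ T) (teleH i j true ∈ T))) := by
    intro hss
    obtain ⟨hxor, hpath⟩ := hss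
    have hfib : ∀ q : TeleAux.PairIdx n k,
        TeleAux.ed q false ∈ T ∨ TeleAux.ed q true ∈ T := by
      rintro (⟨⟩ | i | ⟨i, j⟩)
      · rcases hxor with ⟨hf, _⟩ | ⟨hg, _⟩
        · exact Or.inr hf
        · exact Or.inl hg
      · exact TeleAux.e_in_T_of_path T hpath i
      · exact TeleAux.h_in_T_of_conn T hconn i j
    have hx := TeleAux.count_xor T hcard' hfib
    refine ⟨hxor, fun i => ?_, fun i j => ?_⟩
    · exact hx (Sum.inr (Sum.inl i))
    · exact hx (Sum.inr (Sum.inr ⟨i, j⟩))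
  have backward : (Xor' (teleF ∈ T) (teleG ∈ T) ∧
       (∀ i : Fin n, Xor' (teleEdge i false ∈ T) (teleEdge i true ∈ T)) ∧
       (∀ (i : Fin (n + 1)) (j : Fin (k i)),
         Xor' (teleH i j false ∈ T) (teleH i j true ∈ T))) →
      SingleStepTree (teleGraph n k) teleC (teleZ 0) (teleZ (Fin.last n)) teleF teleG T := by
    rintro ⟨hxor, he, _⟩
    refine ⟨hxor, ?_⟩
    refine TeleAux.spine_reach T (fun i => ?_) (Fin.last n)
    rcases he i with ⟨h, _⟩ | ⟨h, _⟩
    · exact ⟨false, h⟩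
    · exact ⟨true, h⟩
  have compl : SingleStepTree (teleGraph n k) teleC (teleZ 0) (teleZ (Fin.last n))
      teleF teleG T → (teleGraph n k).IsSpanningTree (Finset.univ \ T) := by
    intro hss
    obtain ⟨hxorfg, hxe, hxh⟩ := forward hss
    have hmem : ∀ e : TeleE n k, e ∈ (Finset.univ \ T) ↔ e ∉ T := by
      intro e
      simp [Finset.mem_sdiff]
    have hspine : ∀ i : Fin (n + 1),
        (teleGraph n k).ReachOn (Finset.univ \ T) (teleZ 0) (teleZ i) := by
      intro i
      refine TeleAux.reach_of_avoid (TeleAux.spine_reach _ ?_ i)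
      intro i'
      rcases hxe i' with ⟨_, h2⟩ | ⟨_, h2⟩
      · exact ⟨true, (hmem _).2 h2⟩
      · exact ⟨false, (hmem _).2 h2⟩
    have hc : (teleGraph n k).ReachOn (Finset.univ \ T) teleC (teleZ 0) := by
      rcases hxorfg with ⟨_, hg⟩ | ⟨_, hf⟩
      · exact Relation.ReflTransGen.single ⟨teleG, (hmem _).2 hg, TeleAux.ends_g⟩
      · exact (Relation.ReflTransGen.single ⟨teleF, (hmem _).2 hf, TeleAux.ends_f⟩).trans
          (TeleAux.reachOn_symm _ _ (hspine (Fin.last n)))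
    have hall : ∀ v : TeleV n k, (teleGraph n k).ReachOn (Finset.univ \ T) v (teleZ 0) := by
      rintro (⟨⟩ | i | ⟨i, j⟩)
      · exact hc
      · exact TeleAux.reachOn_symm _ _ (hspine i)
      · rcases hxh i j with ⟨_, h2⟩ | ⟨_, h2⟩
        · exact (Relation.ReflTransGen.single
            ⟨teleH i j true, (hmem _).2 h2, TeleAux.ends_h1 i j⟩).trans hc
        · exact (Relation.ReflTransGen.single
            ⟨teleH i j false, (hmem _).2 h2, TeleAux.ends_h0 i j⟩).trans
            (TeleAux.reachOn_symm _ _ (hspine i))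
    constructor
    · intro x y
      exact (hall x).trans (TeleAux.reachOn_symm _ _ (hall y))
    · have h1 : (Finset.univ \ T).card = Fintype.card (TeleE n k) - T.card := by
        rw [Finset.card_sdiff_of_subset (Finset.subset_univ T), Finset.card_univ]
      rw [h1, TeleAux.card_E, hcard', hcardV]
      omega
  exact ⟨⟨forward, backward⟩, compl⟩

end
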